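/- Assume p_min > p_tail and let T > 0 and α > 0 satisfy exp(−α²/18) ≤ (p_min − p_tail)/8. If θ ∈ ℝ satisfies |θ − λ_m| ≥ α/(3T) for every m ∈ D, then for every e ∈ ℂ with |e| ≤ (p_min − p_tail)/8 one has |Σ_{m′=1}^M p_{m′} exp(−T²(λ_{m′} − θ)²/2) + e| ≤ p_tail + (p_min − p_tail)/4. -/

import Mathlib

open Real Set

theorem filter_upper_bound_far_from_dominant
    (M : ℕ) (lam p : Fin M → ℝ) (D : Finset (Fin M)) (hD : D.Nonempty)
    (hp : ∀ m, 0 ≤ p m) (hsum : ∑ m, p m = 1)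
    (pmin ptail : ℝ) (hpmin : pmin = D.inf' hD p) (hptail : ptail = ∑ m ∈ Dᶜ, p m)
    (hdom : ptail < pmin)
    (T α : ℝ) (hT : 0 < T) (hα : 0 < α)
    (hfil : Real.exp (-α ^ 2 / 18) ≤ (pmin - ptail) / 8)
    (θ : ℝ) (hθ : ∀ m ∈ D, α / (3 * T) ≤ |θ - lam m|)
    (e : ℂ) (he : ‖e‖ ≤ (pmin - ptail) / 8) :
    ‖(∑ m' : Fin M, (p m' : ℂ) * Real.exp (-(T ^ 2 * (lam m' - θ) ^ 2) / 2)) + e‖ ≤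
      ptail + (pmin - ptail) / 4 := by
  set S : ℝ := ∑ m' : Fin M, p m' * Real.exp (-(T ^ 2 * (lam m' - θ) ^ 2) / 2) with hSdef
  have hcast : (∑ m' : Fin M, (p m' : ℂ) * Real.exp (-(T ^ 2 * (lam m' - θ) ^ 2) / 2))
      = (S : ℂ) := by
    rw [hSdef]; push_cast; rfl
  have hSnonneg : 0 ≤ S := by
    apply Finset.sum_nonneg
    intro m _
    exact mul_nonneg (hp m) (Real.exp_pos _).le
  -- bound S
  have hsplit : S = (∑ m ∈ D, p m * Real.exp (-(T ^ 2 * (lam m - θ) ^ 2) / 2))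
      + ∑ m ∈ Dᶜ, p m * Real.exp (-(T ^ 2 * (lam m - θ) ^ 2) / 2) := by
    rw [hSdef, ← Finset.sum_add_sum_compl D]
  have hDsum : ∑ m ∈ D, p m ≤ 1 := by
    rw [← hsum]
    exact Finset.sum_le_sum_of_subset_of_nonneg (Finset.subset_univ D)
      (fun i _ _ => hp i)
  have h1 : (∑ m ∈ D, p m * Real.exp (-(T ^ 2 * (lam m - θ) ^ 2) / 2))
      ≤ (pmin - ptail) / 8 := by
    calc (∑ m ∈ D, p m * Real.exp (-(T ^ 2 * (lam m - θ) ^ 2) / 2))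
        ≤ ∑ m ∈ D, p m * Real.exp (-α ^ 2 / 18) := by
          apply Finset.sum_le_sum
          intro m hm
          apply mul_le_mul_of_nonneg_left _ (hp m)
          apply Real.exp_le_exp.mpr
          have h := hθ m hm
          have h2 : (α / (3 * T)) ^ 2 ≤ (θ - lam m) ^ 2 := by
            rw [← sq_abs (θ - lam m)]
            exact pow_le_pow_left₀ (div_pos hα (by linarith)).le h 2
          rw [div_pow, div_le_iff₀ (by positivity)] at h2
          nlinarith [sq_nonneg (θ - lam m), sq_nonneg α]
      _ = (∑ m ∈ D, p m) * Real.exp (-α ^ 2 / 18) := by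
          rw [Finset.sum_mul]
      _ ≤ 1 * ((pmin - ptail) / 8) := by
          apply mul_le_mul hDsum hfil (Real.exp_pos _).le zero_le_one
      _ = (pmin - ptail) / 8 := one_mul _
  have h2 : (∑ m ∈ Dᶜ, p m * Real.exp (-(T ^ 2 * (lam m - θ) ^ 2) / 2)) ≤ ptail := by
    rw [hptail]
    apply Finset.sum_le_sum
    intro m _
    calc p m * Real.exp (-(T ^ 2 * (lam m - θ) ^ 2) / 2) ≤ p m * 1 := by
          apply mul_le_mul_of_nonneg_left _ (hp m)
          rw [Real.exp_le_one_iff]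
          have : 0 ≤ T ^ 2 * (lam m - θ) ^ 2 := by positivity
          linarith
      _ = p m := mul_one _
  have hSbound : S ≤ ptail + (pmin - ptail) / 8 := by
    rw [hsplit]; linarith
  calc ‖(∑ m' : Fin M, (p m' : ℂ) * Real.exp (-(T ^ 2 * (lam m' - θ) ^ 2) / 2)) + e‖
      ≤ ‖((S : ℂ))‖ + ‖e‖ := by
        rw [hcast]; exact norm_add_le _ _
    _ ≤ (ptail + (pmin - ptail) / 8) + (pmin - ptail) / 8 := by
        rw [Complex.norm_of_nonneg hSnonneg]
        exact add_le_add hSbound he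
    _ = ptail + (pmin - ptail) / 4 := by ring
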